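/- If the Alexandroff duplicate AD(X) of a space X is star-K-Scheepers, then X is star-K-Scheepers. -/
import Mathlib


open Set

/-- Star of a set `A` with respect to a family `P`: `St(A,P) = ⋃{B ∈ P : A ∩ B ≠ ∅}`. -/
def st {X : Type*} (A : Set X) (P : Set (Set X)) : Set X :=
  ⋃₀ {B | B ∈ P ∧ (A ∩ B).Nonempty}

/-- `U` is an open cover of the space. -/
def IsOpenCover {X : Type*} [TopologicalSpace X] (U : Set (Set X)) : Prop :=
  (∀ V ∈ U, IsOpen V) ∧ ⋃₀ U = Set.univ

/-- An ω-cover: an open cover such that every finite subset lies in some member. -/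
def IsOmegaCover {X : Type*} [TopologicalSpace X] (U : Set (Set X)) : Prop :=
  IsOpenCover U ∧ ∀ F : Set X, F.Finite → ∃ V ∈ U, F ⊆ V

/-- The star-K-Scheepers property. -/
def StarKScheepers (X : Type*) [TopologicalSpace X] : Prop :=
  ∀ U : ℕ → Set (Set X), (∀ n, IsOpenCover (U n)) →
    ∃ K : ℕ → Set X, (∀ n, IsCompact (K n)) ∧
      IsOmegaCover {S | ∃ n, S = st (K n) (U n)}

/-- The topology of the Alexandroff duplicate `AD(X) = X × Bool`: points `(x, true)` are
isolated, and basic neighbourhoods of `(x, false)` are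
`(U ×ˢ univ) \ {(x, true)}` for `U` an open neighbourhood of `x`. -/
def ADTopology (X : Type*) [TopologicalSpace X] : TopologicalSpace (X × Bool) where
  IsOpen S := ∀ x : X, (x, false) ∈ S →
    ∃ U : Set X, IsOpen U ∧ x ∈ U ∧ (U ×ˢ (Set.univ : Set Bool)) \ {(x, true)} ⊆ S
  isOpen_univ := fun x _ =>
    ⟨Set.univ, isOpen_univ, trivial, fun _ _ => trivial⟩
  isOpen_inter := fun s t hs ht x hx => by
    obtain ⟨U, hU, hxU, hUs⟩ := hs x hx.1
    obtain ⟨V, hV, hxV, hVt⟩ := ht x hx.2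
    refine ⟨U ∩ V, hU.inter hV, ⟨hxU, hxV⟩, fun p hp => ?_⟩
    exact ⟨hUs ⟨⟨hp.1.1.1, hp.1.2⟩, hp.2⟩, hVt ⟨⟨hp.1.1.2, hp.1.2⟩, hp.2⟩⟩
  isOpen_sUnion := fun 𝒮 h x hx => by
    obtain ⟨t, ht𝒮, hxt⟩ := hx
    obtain ⟨U, hU, hxU, hUt⟩ := h t ht𝒮 x hxt
    exact ⟨U, hU, hxU, fun p hp => ⟨t, ht𝒮, hUt hp⟩⟩
theorem starKScheepers_of_AD {X : Type*} [TopologicalSpace X]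
    (h : @StarKScheepers (X × Bool) (ADTopology X)) : StarKScheepers X := by
  intro U hU
  -- lift the covers to AD(X)
  set W : ℕ → Set (Set (X × Bool)) := fun n => {S | ∃ V ∈ U n, S = V ×ˢ (univ : Set Bool)}
    with hW
  have hWopen : ∀ n, ∀ S ∈ W n, @IsOpen _ (ADTopology X) S := by
    intro n S hS
    obtain ⟨V, hV, rfl⟩ := hS
    intro x hx
    exact ⟨V, (hU n).1 V hV, hx.1, fun p hp => ⟨hp.1.1, trivial⟩⟩
  have hWcov : ∀ n, @IsOpenCover _ (ADTopology X) (W n) := by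
    intro n
    refine ⟨hWopen n, eq_univ_iff_forall.2 fun p => ?_⟩
    have : p.1 ∈ ⋃₀ U n := (hU n).2 ▸ mem_univ _
    obtain ⟨V, hV, hpV⟩ := this
    exact ⟨V ×ˢ univ, ⟨V, hV, rfl⟩, hpV, trivial⟩
  obtain ⟨K, hK, ⟨⟨_, _⟩, homega⟩⟩ := h W hWcov
  -- projection is continuous
  have hcont : @Continuous _ _ (ADTopology X) _ (Prod.fst : X × Bool → X) := by
    rw [@continuous_def _ _ (ADTopology X) _]
    intro s hs
    intro x hx
    exact ⟨s, hs, hx, fun p hp => hp.1.1⟩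
  refine ⟨fun n => Prod.fst '' K n, fun n => (@IsCompact.image _ _ (ADTopology X) _ _ _ (hK n) hcont), ?_⟩
  -- key: star in X contains projection of star in AD(X)
  have key : ∀ n (x : X), (x, false) ∈ st (K n) (W n) → x ∈ st (Prod.fst '' K n) (U n) := by
    intro n x hx
    obtain ⟨B, ⟨hB, ⟨p, hpK, hpB⟩⟩, hxB⟩ := hx
    obtain ⟨V, hV, rfl⟩ := hB
    exact ⟨V, ⟨hV, ⟨p.1, ⟨p, hpK, rfl⟩, hpB.1⟩⟩, hxB.1⟩
  have hstopen : ∀ n, IsOpen (st (Prod.fst '' K n) (U n)) := by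
    intro n
    exact isOpen_sUnion fun B hB => (hU n).1 B hB.1
  have hfin : ∀ F : Set X, F.Finite → ∃ S ∈ {S | ∃ n, S = st (Prod.fst '' K n) (U n)}, F ⊆ S := by
    intro F hF
    obtain ⟨S, ⟨n, rfl⟩, hFS⟩ := homega ((fun x => (x, false)) '' F) (hF.image _)
    refine ⟨st (Prod.fst '' K n) (U n), ⟨n, rfl⟩, fun x hx => ?_⟩
    exact key n x (hFS ⟨x, hx, rfl⟩)
  refine ⟨⟨fun S hS => ?_, eq_univ_iff_forall.2 fun x => ?_⟩, hfin⟩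
  · obtain ⟨n, rfl⟩ := hS
    exact hstopen n
  · obtain ⟨S, hS, hxS⟩ := hfin {x} (finite_singleton x)
    exact ⟨S, hS, hxS rfl⟩
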